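/- Let Σ₀ be an SPD real n×n matrix, let L be an invertible real n×n matrix, and let O be an orthogonal real n×n matrix (O Oᵀ = I). Then ((L O)ᵀ)⁻¹ · √((L O)ᵀ Σ₀ (L O)) · (L O)⁻¹ = (Lᵀ)⁻¹ · √(Lᵀ Σ₀ L) · L⁻¹. Hence the matrix Λ = (1/2)(Lᵀ)⁻¹ √(Lᵀ Σ₀ L) L⁻¹ depends on the order-flow covariance Ω = L Lᵀ only, not on the choice of the square-root factor L. -/

import Mathlib

open Matrix
open Classical in
/-- The unique positive semidefinite square root of a positive semidefinite
real matrix (defined as `0` on matrices that are not positive semidefinite). -/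
noncomputable def psdSqrt {n : ℕ} (A : Matrix (Fin n) (Fin n) ℝ) : Matrix (Fin n) (Fin n) ℝ :=
  if h : A.PosSemidef then
    (h.1.eigenvectorUnitary : Matrix (Fin n) (Fin n) ℝ) *
      diagonal ((RCLike.ofReal : ℝ → ℝ) ∘ (√·) ∘ h.1.eigenvalues) *
      (star h.1.eigenvectorUnitary : Matrix (Fin n) (Fin n) ℝ)
  else 0

/-- Port helper: the square root of a positive semidefinite matrix (old `PosSemidef.sqrt`). -/
noncomputable def Matrix.PosSemidef.sqrt {n : ℕ} {A : Matrix (Fin n) (Fin n) ℝ}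
    (h : A.PosSemidef) : Matrix (Fin n) (Fin n) ℝ :=
  (h.1.eigenvectorUnitary : Matrix (Fin n) (Fin n) ℝ) *
    diagonal ((RCLike.ofReal : ℝ → ℝ) ∘ (√·) ∘ h.1.eigenvalues) *
    (star h.1.eigenvectorUnitary : Matrix (Fin n) (Fin n) ℝ)

open scoped MatrixOrder in
theorem Matrix.PosSemidef.sqrt_eq_cfc {n : ℕ} {A : Matrix (Fin n) (Fin n) ℝ}
    (h : A.PosSemidef) : h.sqrt = CFC.sqrt A := by
  rw [CFC.sqrt_eq_cfc, cfc_nnreal_eq_real _ A h.nonneg, h.1.cfc_eq]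
  simp [Matrix.PosSemidef.sqrt, IsHermitian.cfc, Unitary.conjStarAlgAut_apply, Function.comp_def,
    h.eigenvalues_nonneg]

open scoped MatrixOrder in
theorem Matrix.PosSemidef.posSemidef_sqrt {n : ℕ} {A : Matrix (Fin n) (Fin n) ℝ}
    (h : A.PosSemidef) : h.sqrt.PosSemidef := by
  rw [h.sqrt_eq_cfc]
  exact (CFC.sqrt_nonneg A).posSemidef

open scoped MatrixOrder in
theorem Matrix.PosSemidef.sqrt_mul_self {n : ℕ} {A : Matrix (Fin n) (Fin n) ℝ}
    (h : A.PosSemidef) : h.sqrt * h.sqrt = A := by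
  rw [h.sqrt_eq_cfc]
  exact CFC.sqrt_mul_sqrt_self A h.nonneg

open scoped MatrixOrder in
theorem Matrix.PosSemidef.eq_sqrt_of_sq_eq {n : ℕ} {A B : Matrix (Fin n) (Fin n) ℝ}
    (hA : A.PosSemidef) (hB : B.PosSemidef) (hAB : A ^ 2 = B) : A = hB.sqrt := by
  rw [hB.sqrt_eq_cfc, eq_comm, CFC.sqrt_eq_iff B A hB.nonneg hA.nonneg, ← sq, hAB]

/-- Independence of the Kyle impact matrix from the choice of square-root factor of the
order-flow covariance: for SPD `Σ₀`, invertible `L` and orthogonal `O`,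
`((L O)ᵀ)⁻¹ √((L O)ᵀ Σ₀ (L O)) (L O)⁻¹ = (Lᵀ)⁻¹ √(Lᵀ Σ₀ L) L⁻¹`. -/
theorem stmt17 {n : ℕ} (S0 L O : Matrix (Fin n) (Fin n) ℝ)
    (hS0 : S0.PosDef) (hL : IsUnit L.det) (hO : O * Oᵀ = 1) :
    ((L * O)ᵀ)⁻¹ * psdSqrt ((L * O)ᵀ * S0 * (L * O)) * (L * O)⁻¹ =
      (Lᵀ)⁻¹ * psdSqrt (Lᵀ * S0 * L) * L⁻¹ := by
  have hOO : Oᵀ * O = 1 := mul_eq_one_comm.mp hO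
  have hM : (Lᵀ * S0 * L).PosSemidef := by
    have := hS0.posSemidef.conjTranspose_mul_mul_same L
    simpa [Matrix.conjTranspose_eq_transpose_of_trivial, Matrix.mul_assoc] using this
  have hM' : ((L * O)ᵀ * S0 * (L * O)).PosSemidef := by
    have := hS0.posSemidef.conjTranspose_mul_mul_same (L * O)
    simpa [Matrix.conjTranspose_eq_transpose_of_trivial, Matrix.mul_assoc] using this
  have hB : (Oᵀ * hM.sqrt * O).PosSemidef := by
    have := hM.posSemidef_sqrt.conjTranspose_mul_mul_same O
    simpa [Matrix.conjTranspose_eq_transpose_of_trivial, Matrix.mul_assoc] using this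
  have hsq : (Oᵀ * hM.sqrt * O) ^ 2 = (L * O)ᵀ * S0 * (L * O) := by
    have h2 := hM.sqrt_mul_self
    calc (Oᵀ * hM.sqrt * O) ^ 2
        = Oᵀ * (hM.sqrt * (O * Oᵀ) * hM.sqrt) * O := by
          rw [pow_two]; noncomm_ring
      _ = Oᵀ * (Lᵀ * S0 * L) * O := by rw [hO]; simp [h2, Matrix.mul_assoc]
      _ = (L * O)ᵀ * S0 * (L * O) := by
          simp [Matrix.transpose_mul, Matrix.mul_assoc]
  have hkey : psdSqrt ((L * O)ᵀ * S0 * (L * O)) = Oᵀ * psdSqrt (Lᵀ * S0 * L) * O := by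
    rw [psdSqrt, psdSqrt, dif_pos hM, dif_pos hM']
    exact (hB.eq_sqrt_of_sq_eq hM' hsq).symm
  have hOunit : IsUnit O.det := by
    have := congrArg Matrix.det hO
    simp [Matrix.det_mul] at this
    exact IsUnit.of_mul_eq_one _ this
  have hOinv : O⁻¹ = Oᵀ := by
    apply Matrix.inv_eq_right_inv hO
  rw [hkey, Matrix.transpose_mul, Matrix.mul_inv_rev, Matrix.mul_inv_rev, hOinv]
  have hOTinv : (Oᵀ)⁻¹ = O := by
    apply Matrix.inv_eq_right_inv hOO
  rw [hOTinv]
  calc (Lᵀ)⁻¹ * O * (Oᵀ * psdSqrt (Lᵀ * S0 * L) * O) * (Oᵀ * L⁻¹)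
      = (Lᵀ)⁻¹ * ((O * Oᵀ) * psdSqrt (Lᵀ * S0 * L) * (O * Oᵀ)) * L⁻¹ := by
        simp [Matrix.mul_assoc]
    _ = (Lᵀ)⁻¹ * psdSqrt (Lᵀ * S0 * L) * L⁻¹ := by
        rw [hO]; simp
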